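/- There exists N₀ such that the following holds for all integers n ≥ N₀. Let k be an integer with 3·10⁵ ≤ k ≤ n/(10⁵ · ln n), and let X₁, …, Xₙ be independent random points, each uniformly distributed in the unit square [0,1]² ⊆ ℝ². Then with probability at least 1 − 1/n there exist k indices i₁ < i₂ < … < i_k such that the points X_{i₁}, …, X_{i_k} are pairwise distinct and every two of them are at Euclidean distance at least 0.995^{3/2} · √3 · (4/27)^{1/4} / √k. -/

import Mathlib

open Real MeasureTheory ENNReal

def unitSquare : Set (EuclideanSpace ℝ (Fin 2)) :=
  {p | ∀ j : Fin 2, p j ∈ Set.Icc (0 : ℝ) 1}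

noncomputable def unifSquare : Measure (EuclideanSpace ℝ (Fin 2)) :=
  volume.restrict unitSquare

-- box as subset of EuclideanSpace
def box (a b : Fin 2 → ℝ) : Set (EuclideanSpace ℝ (Fin 2)) :=
  {p | ∀ j : Fin 2, p j ∈ Set.Icc (a j) (b j)}

lemma box_eq_preimage (a b : Fin 2 → ℝ) :
    box a b = (MeasurableEquiv.toLp 2 (Fin 2 → ℝ)).symm ⁻¹' (Set.univ.pi fun j => Set.Icc (a j) (b j)) := by
  ext p
  simp only [box, Set.mem_preimage, Set.mem_pi, Set.mem_univ, forall_true_left, Set.mem_setOf_eq]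
  rfl

lemma measurableSet_box (a b : Fin 2 → ℝ) : MeasurableSet (box a b) := by
  rw [box_eq_preimage]
  exact (MeasurableSet.univ_pi fun j => measurableSet_Icc).preimage (MeasurableEquiv.measurable _)

lemma volume_box (a b : Fin 2 → ℝ) :
    volume (box a b) = ∏ j : Fin 2, ENNReal.ofReal (b j - a j) := by
  rw [box_eq_preimage,
    (EuclideanSpace.volume_preserving_symm_measurableEquiv_toLp (Fin 2)).measure_preimage
      ((MeasurableSet.univ_pi fun j => measurableSet_Icc).nullMeasurableSet)]
  rw [volume_pi_pi]
  simp [Real.volume_Icc]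

lemma unitSquare_eq : unitSquare = box (fun _ => 0) (fun _ => 1) := rfl

instance : IsProbabilityMeasure unifSquare := by
  constructor
  rw [unifSquare, Measure.restrict_apply_univ, unitSquare_eq, volume_box]
  simp

lemma unifSquare_box (a b : Fin 2 → ℝ) (h : box a b ⊆ unitSquare) :
    unifSquare (box a b) = ∏ j : Fin 2, ENNReal.ofReal (b j - a j) := by
  rw [unifSquare, Measure.restrict_apply (measurableSet_box a b),
    Set.inter_eq_self_of_subset_left h, volume_box]


noncomputable def latO (s : ℝ) (j : ℕ) : ℝ := if j % 2 = 1 then s / 2 else 0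

noncomputable def ctr (ρ s : ℝ) (p : ℕ × ℕ) : EuclideanSpace ℝ (Fin 2) :=
  (WithLp.equiv 2 (Fin 2 → ℝ)).symm ![ρ + latO s p.1 + p.2 * s, ρ + p.1 * (Real.sqrt 3 / 2 * s)]

lemma half_int (d : ℤ) : (1/4 : ℝ) ≤ ((d : ℝ) + 1/2)^2 := by
  rcases le_or_gt 0 d with h | h
  · have : (0:ℝ) ≤ d := by exact_mod_cast h
    nlinarith
  · have h' : d ≤ -1 := by omega
    have : (d:ℝ) ≤ -1 := by exact_mod_cast h'
    nlinarith

lemma half_int' (a b : ℕ) : (1/4:ℝ) ≤ ((a:ℝ) - b + 1/2)^2 := by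
  have := half_int ((a:ℤ) - b)
  push_cast at this
  exact this

lemma key (s : ℝ) (hs : 0 < s) (j i j' i' : ℕ) (hle : j ≤ j') (hne : ¬(j = j' ∧ i = i')) :
    s^2 ≤ (latO s j + i*s - (latO s j' + i'*s))^2
        + ((j:ℝ)*(Real.sqrt 3 / 2 * s) - j'*(Real.sqrt 3 / 2 * s))^2 := by
  have h3 : Real.sqrt 3 ^ 2 = 3 := Real.sq_sqrt (by norm_num)
  rcases eq_or_lt_of_le hle with rfl | hlt
  · -- same row
    have hne' : i ≠ i' := fun h => hne ⟨rfl, h⟩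
    have h1 : ((i:ℤ) - i') ≠ 0 := by omega
    have h2 : (1:ℤ) ≤ ((i:ℤ) - i')^2 := by rcases h1.lt_or_gt with h | h <;> nlinarith
    have hR : (1:ℝ) ≤ ((i:ℝ) - i')^2 := by
      calc (1:ℝ) ≤ ((((i:ℤ) - i') : ℤ) : ℝ)^2 := by exact_mod_cast h2
        _ = ((i:ℝ) - i')^2 := by push_cast; ring
    have hdx : (latO s j + i*s - (latO s j + i'*s))^2 = ((i:ℝ) - i')^2 * s^2 := by ring
    nlinarith [mul_le_mul_of_nonneg_right hR (sq_nonneg s), sq_nonneg ((j:ℝ)*(Real.sqrt 3 / 2 * s) - j*(Real.sqrt 3 / 2 * s))]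
  · rcases Nat.lt_or_ge j' (j + 2) with h2 | h2
    · -- adjacent rows
      have hj' : j' = j + 1 := by omega
      subst hj'
      have hdy : ((j:ℝ)*(Real.sqrt 3 / 2 * s) - (j+1:ℕ)*(Real.sqrt 3 / 2 * s))^2
          = Real.sqrt 3 ^2 / 4 * s^2 := by push_cast; ring
      rw [hdy, h3]
      rcases Nat.mod_two_eq_zero_or_one j with hp | hp
      · have hp' : (j+1) % 2 = 1 := by omega
        rw [latO, latO, if_neg (by omega), if_pos hp']
        have hh' := half_int' i' i
        have hdx : (0 + i*s - (s/2 + i'*s))^2 = ((i':ℝ) - i + 1/2)^2 * s^2 := by ring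
        rw [hdx]
        nlinarith [mul_le_mul_of_nonneg_right hh' (sq_nonneg s)]
      · have hp' : ¬((j+1) % 2 = 1) := by omega
        rw [latO, latO, if_pos hp, if_neg hp']
        have hh' := half_int' i i'
        have hdx : (s/2 + i*s - (0 + i'*s))^2 = (((i:ℝ) - i') + 1/2)^2 * s^2 := by ring
        rw [hdx]
        nlinarith [mul_le_mul_of_nonneg_right hh' (sq_nonneg s)]
    · -- far rows
      have hc : ((j:ℝ)) + 2 ≤ (j':ℝ) := by exact_mod_cast h2
      have hsq : (4:ℝ) ≤ ((j':ℝ) - j)^2 := by nlinarith [Nat.cast_nonneg (α := ℝ) j]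
      have hdy : ((j:ℝ)*(Real.sqrt 3 / 2 * s) - j'*(Real.sqrt 3 / 2 * s))^2
          = ((j':ℝ) - j)^2 * (Real.sqrt 3 ^2 / 4) * s^2 := by ring
      rw [hdy, h3]
      nlinarith [mul_le_mul_of_nonneg_right hsq (sq_nonneg s), sq_nonneg (latO s j + i*s - (latO s j' + i'*s))]

lemma ctr_dist (ρ s : ℝ) (hs : 0 < s) (p q : ℕ × ℕ) (hne : p ≠ q) :
    s ≤ dist (ctr ρ s p) (ctr ρ s q) := by
  have hd : dist (ctr ρ s p) (ctr ρ s q)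
      = Real.sqrt ((ctr ρ s p 0 - ctr ρ s q 0)^2 + (ctr ρ s p 1 - ctr ρ s q 1)^2) := by
    rw [EuclideanSpace.dist_eq, Fin.sum_univ_two]
    simp [Real.dist_eq, sq_abs]
  rw [hd]
  rw [show ctr ρ s p 0 = ρ + latO s p.1 + p.2 * s from rfl,
      show ctr ρ s q 0 = ρ + latO s q.1 + q.2 * s from rfl,
      show ctr ρ s p 1 = ρ + p.1 * (Real.sqrt 3 / 2 * s) from rfl,
      show ctr ρ s q 1 = ρ + q.1 * (Real.sqrt 3 / 2 * s) from rfl]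
  rw [Real.le_sqrt hs.le (by positivity)]
  rcases le_total p.1 q.1 with hle | hle
  · have := key s hs p.1 p.2 q.1 q.2 hle (by
      intro ⟨h1, h2⟩; exact hne (Prod.ext h1 h2))
    nlinarith [this]
  · have := key s hs q.1 q.2 p.1 p.2 hle (by
      intro ⟨h1, h2⟩; exact hne (Prod.ext h1.symm h2.symm))
    nlinarith [this]

lemma sqrt3_le : Real.sqrt 3 ≤ 1.7320509 := by
  rw [show (1.7320509:ℝ) = Real.sqrt (1.7320509^2) by rw [Real.sqrt_sq (by norm_num)]]
  exact Real.sqrt_le_sqrt (by norm_num)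

lemma sqrt3_ge : (1.73:ℝ) ≤ Real.sqrt 3 := by
  rw [show (1.73:ℝ) = Real.sqrt (1.73^2) by rw [Real.sqrt_sq (by norm_num)]]
  exact Real.sqrt_le_sqrt (by norm_num)

lemma numeric1 (r u v : ℝ) (hr0 : 0 ≤ r) (hu0 : 0 ≤ u)
    (hr : r ≤ 0.00225/547) (hu : u ≤ 1.073/547) (h3 : v ≤ 1.7320509) :
    v / 2 * 1.073^2 * 1 ≤ (1 - 2*r) * (1 - 2*r - u/2) := by
  nlinarith [mul_nonneg hr0 hu0, mul_nonneg hr0 hr0]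

set_option maxHeartbeats 2000000 in
lemma lattice_exists (k : ℕ) (hk : 3 * 10^5 ≤ k) :
    ∃ C : Finset (EuclideanSpace ℝ (Fin 2)),
      C.card = k ∧
      (∀ c ∈ C, ∀ j : Fin 2,
        c j ∈ Set.Icc (0.00225 / Real.sqrt k) (1 - 0.00225 / Real.sqrt k)) ∧
      (∀ c ∈ C, ∀ c' ∈ C, c ≠ c' → 1.073 / Real.sqrt k ≤ dist c c') := by
  classical
  have hk0 : 0 < k := by omega
  set q : ℝ := Real.sqrt k with hqdef
  have hq547 : (547:ℝ) ≤ q := by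
    rw [hqdef, show (547:ℝ) = Real.sqrt (547^2) by rw [Real.sqrt_sq (by norm_num)]]
    apply Real.sqrt_le_sqrt
    have : (3 * 10^5 : ℝ) ≤ (k:ℝ) := by exact_mod_cast hk
    norm_num at this ⊢
    linarith
  have hq0 : 0 < q := by linarith
  set t : ℝ := 1 / q with htdef
  have ht0 : 0 < t := by positivity
  have ht : t ≤ 1/547 := by
    rw [htdef]
    apply div_le_div_of_nonneg_left (by norm_num) (by norm_num) hq547
  have hkt : (k:ℝ) * t^2 = 1 := by
    rw [htdef]
    rw [div_pow, one_pow, hqdef, Real.sq_sqrt (Nat.cast_nonneg k)]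
    field_simp
  set ρ : ℝ := 0.00225 * t with hρdef
  set s : ℝ := 1.073 * t with hsdef
  set h : ℝ := Real.sqrt 3 / 2 * s with hhdef
  have hs0 : 0 < s := by positivity
  have hh0 : 0 < h := by
    have := sqrt3_ge
    rw [hhdef]; positivity
  have hρ0 : 0 < ρ := by positivity
  have hρs : 0.00225 / q = ρ := by rw [hρdef, htdef]; ring
  have hss : 1.073 / q = s := by rw [hsdef, htdef]; ring
  have hρsmall : ρ ≤ 0.00225/547 := by rw [hρdef]; linarith
  have hssmall : s ≤ 1.073/547 := by rw [hsdef]; linarith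
  set M : ℕ := Nat.floor ((1 - 2*ρ)/s - 1/2) + 1 with hMdef
  set R : ℕ := Nat.floor ((1 - 2*ρ)/h) + 1 with hRdef
  have h12ρ : (0:ℝ) ≤ 1 - 2*ρ := by linarith
  have hargM : (0:ℝ) ≤ (1 - 2*ρ)/s - 1/2 := by
    have h1 : (1:ℝ)/2 ≤ (1-2*ρ)/s := by
      rw [le_div_iff₀ hs0]; linarith
    linarith
  have hMlt : (1 - 2*ρ)/s - 1/2 < M := by
    rw [hMdef]; push_cast; exact Nat.lt_floor_add_one _
  have hRlt : (1 - 2*ρ)/h < R := by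
    rw [hRdef]; push_cast; exact Nat.lt_floor_add_one _
  have hMs : 1 - 2*ρ - s/2 < (M:ℝ) * s := by
    have h1 : (1 - 2*ρ)/s < (M:ℝ) + 1/2 := by linarith
    rw [div_lt_iff₀ hs0, add_mul] at h1
    linarith
  have hRh : 1 - 2*ρ < (R:ℝ) * h := by
    have := (div_lt_iff₀ hh0).mp hRlt
    linarith
  have hcount : (k:ℝ) ≤ (R:ℝ) * M := by
    have hMs0 : (0:ℝ) < 1 - 2*ρ - s/2 := by linarith
    have hprod : (1 - 2*ρ) * (1 - 2*ρ - s/2) ≤ ((R:ℝ)*h) * ((M:ℝ)*s) := by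
      apply mul_le_mul hRh.le hMs.le hMs0.le
      positivity
    have hkhs : (k:ℝ) * (h*s) ≤ (1 - 2*ρ) * (1 - 2*ρ - s/2) := by
      have he : (k:ℝ) * (h*s) = Real.sqrt 3 / 2 * 1.073^2 * ((k:ℝ) * t^2) := by
        rw [hhdef, hsdef]; ring
      rw [he, hkt]
      exact numeric1 ρ s (Real.sqrt 3) hρ0.le hs0.le hρsmall hssmall sqrt3_le
    have hre : ((R:ℝ)*h) * ((M:ℝ)*s) = ((R:ℝ)*(M:ℝ))*(h*s) := by ring
    rw [hre] at hprod
    have h2 : (k:ℝ) * (h*s) ≤ ((R:ℝ)*M) * (h*s) := le_trans hkhs hprod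
    have hhs0 : (0:ℝ) < h*s := by positivity
    exact le_of_mul_le_mul_right h2 hhs0
  have hcountN : k ≤ R * M := by exact_mod_cast hcount
  -- coordinate bounds for lattice points
  have hlatO : ∀ j : ℕ, 0 ≤ latO s j ∧ latO s j ≤ s/2 := by
    intro j
    unfold latO
    split <;> constructor <;> linarith
  have hcoord : ∀ p ∈ Finset.range R ×ˢ Finset.range M, ∀ j : Fin 2,
      ctr ρ s p j ∈ Set.Icc ρ (1 - ρ) := by
    rintro ⟨j, i⟩ hp l
    rw [Finset.mem_product, Finset.mem_range, Finset.mem_range] at hp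
    obtain ⟨hjR, hiM⟩ := hp
    have hiM' : (i:ℝ) ≤ (M:ℝ) - 1 := by
      have : (i:ℝ) + 1 ≤ (M:ℝ) := by exact_mod_cast hiM
      linarith
    have hM1 : (M:ℝ) - 1 ≤ (1-2*ρ)/s - 1/2 := by
      have := Nat.floor_le hargM
      rw [hMdef]; push_cast; linarith
    have hjR' : (j:ℝ) ≤ (R:ℝ) - 1 := by
      have : (j:ℝ) + 1 ≤ (R:ℝ) := by exact_mod_cast hjR
      linarith
    have hR1 : (R:ℝ) - 1 ≤ (1-2*ρ)/h := by
      have := Nat.floor_le (div_nonneg h12ρ hh0.le)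
      rw [hRdef]; push_cast; linarith
    have hx : ((1-2*ρ)/s)*s = 1-2*ρ := div_mul_cancel₀ _ hs0.ne'
    have hy : ((1-2*ρ)/h)*h = 1-2*ρ := div_mul_cancel₀ _ hh0.ne'
    obtain ⟨hO0, hOs⟩ := hlatO j
    fin_cases l
    · show ctr ρ s (j, i) 0 ∈ Set.Icc ρ (1 - ρ)
      rw [show ctr ρ s (j, i) 0 = ρ + latO s j + i * s from rfl]
      constructor
      · have : (0:ℝ) ≤ (i:ℝ) * s := by positivity
        linarith
      · have h1 : (i:ℝ) * s ≤ ((1-2*ρ)/s - 1/2) * s := by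
          apply mul_le_mul_of_nonneg_right (by linarith) hs0.le
        rw [sub_mul, hx] at h1
        linarith
    · show ctr ρ s (j, i) 1 ∈ Set.Icc ρ (1 - ρ)
      rw [show ctr ρ s (j, i) 1 = ρ + j * h from rfl]
      constructor
      · have : (0:ℝ) ≤ (j:ℝ) * h := by positivity
        linarith
      · have h1 : (j:ℝ) * h ≤ ((1-2*ρ)/h) * h := by
          apply mul_le_mul_of_nonneg_right (by linarith) hh0.le
        rw [hy] at h1
        linarith
  -- build the finset
  have hinj : Set.InjOn (ctr ρ s) ↑(Finset.range R ×ˢ Finset.range M) := by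
    intro p _ p' _ hpp'
    by_contra hne
    have := ctr_dist ρ s hs0 p p' hne
    rw [hpp', dist_self] at this
    linarith
  set C₀ : Finset (EuclideanSpace ℝ (Fin 2)) :=
    (Finset.range R ×ˢ Finset.range M).image (ctr ρ s) with hC₀def
  have hC₀card : C₀.card = R * M := by
    rw [hC₀def, Finset.card_image_of_injOn hinj, Finset.card_product,
      Finset.card_range, Finset.card_range]
  obtain ⟨C, hCsub, hCcard⟩ := Finset.exists_subset_card_eq (show k ≤ C₀.card by rw [hC₀card]; exact hcountN)
  refine ⟨C, hCcard, ?_, ?_⟩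
  · intro c hc l
    obtain ⟨p, hp, rfl⟩ := Finset.mem_image.mp (hCsub hc)
    rw [hρs]
    exact hcoord p hp l
  · intro c hc c' hc' hne
    obtain ⟨p, hp, rfl⟩ := Finset.mem_image.mp (hCsub hc)
    obtain ⟨p', hp', rfl⟩ := Finset.mem_image.mp (hCsub hc')
    rw [hss]
    exact ctr_dist ρ s hs0 p p' (fun h => hne (by rw [h]))


lemma sqrt2_le : Real.sqrt 2 ≤ 1.41421357 := by
  rw [show (1.41421357:ℝ) = Real.sqrt (1.41421357^2) by rw [Real.sqrt_sq (by norm_num)]]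
  exact Real.sqrt_le_sqrt (by norm_num)

lemma sqrt3_le' : Real.sqrt 3 ≤ 1.7320509 := by
  rw [show (1.7320509:ℝ) = Real.sqrt (1.7320509^2) by rw [Real.sqrt_sq (by norm_num)]]
  exact Real.sqrt_le_sqrt (by norm_num)

lemma b1 : (0.995:ℝ)^((3:ℝ)/2) ≤ 0.992510 := by
  have h0 : (0:ℝ) ≤ (0.995:ℝ)^((3:ℝ)/2) := Real.rpow_nonneg (by norm_num) _
  have hx : ((0.995:ℝ)^((3:ℝ)/2))^2 = (0.995:ℝ)^(3:ℕ) := by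
    rw [← Real.rpow_natCast ((0.995:ℝ)^((3:ℝ)/2)) 2, ← Real.rpow_mul (by norm_num)]
    norm_num
  nlinarith [hx]

lemma b3 : ((4:ℝ)/27)^((1:ℝ)/4) ≤ 0.62041 := by
  have h0 : (0:ℝ) ≤ ((4:ℝ)/27)^((1:ℝ)/4) := Real.rpow_nonneg (by norm_num) _
  have hx : (((4:ℝ)/27)^((1:ℝ)/4))^4 = (4:ℝ)/27 := by
    rw [← Real.rpow_natCast (((4:ℝ)/27)^((1:ℝ)/4)) 4, ← Real.rpow_mul (by norm_num)]
    norm_num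
  have hy : (((4:ℝ)/27)^((1:ℝ)/4))^2 ≤ 0.384901 := by
    nlinarith [hx, h0, sq_nonneg ((((4:ℝ)/27)^((1:ℝ)/4))^2)]
  nlinarith [hy, h0]

lemma const_bound :
    (0.995:ℝ)^((3:ℝ)/2) * Real.sqrt 3 * ((4:ℝ)/27)^((1:ℝ)/4) + 2 * Real.sqrt 2 * 0.00225
      ≤ 1.073 := by
  have h1 := b1
  have h2 := b3
  have h3 := sqrt3_le'
  have h4 := sqrt2_le
  have p1 : (0:ℝ) ≤ (0.995:ℝ)^((3:ℝ)/2) := Real.rpow_nonneg (by norm_num) _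
  have p2 : (0:ℝ) ≤ ((4:ℝ)/27)^((1:ℝ)/4) := Real.rpow_nonneg (by norm_num) _
  have p3 : (0:ℝ) ≤ Real.sqrt 3 := Real.sqrt_nonneg _
  have key : (0.995:ℝ)^((3:ℝ)/2) * Real.sqrt 3 * ((4:ℝ)/27)^((1:ℝ)/4)
      ≤ 0.992510 * 1.7320509 * 0.62041 := by
    apply mul_le_mul _ h2 p2 (by norm_num)
    apply mul_le_mul h1 h3 p3 (by norm_num)
  nlinarith [key]

lemma exp_one_le_3 : Real.exp 1 ≤ 3 := by
  have := Real.exp_one_lt_d9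
  linarith

lemma prob_num (n k : ℕ) (hn : 3 ≤ n) (hk : 3 * 10^5 ≤ k)
    (hkn : (k:ℝ) ≤ (n:ℝ) / (10^5 * Real.log n)) (v : ℝ)
    (hv : v = 0.00002025 / k) :
    (k:ℝ) * (1 - v)^n ≤ 1/n := by
  have hk0 : (0:ℝ) < k := by
    have : (0:ℕ) < k := by omega
    exact_mod_cast this
  have hn0 : (0:ℝ) < n := by
    have : (0:ℕ) < n := by omega
    exact_mod_cast this
  have hn3 : (3:ℝ) ≤ n := by exact_mod_cast hn
  have hlog1 : 1 ≤ Real.log n := by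
    rw [Real.le_log_iff_exp_le hn0]
    exact le_trans exp_one_le_3 hn3
  have hlogpos : (0:ℝ) < 10^5 * Real.log n := by nlinarith
  have hkln : (k:ℝ) * (10^5 * Real.log n) ≤ n := (le_div_iff₀ hlogpos).mp hkn
  have hkn2 : (k:ℝ) ≤ n := by nlinarith
  have hv0 : 0 ≤ v := by rw [hv]; positivity
  have hv1 : v ≤ 1 := by
    rw [hv, div_le_one hk0]
    have : (3*10^5:ℝ) ≤ k := by exact_mod_cast hk
    linarith
  have hnv : 2.025 * Real.log n ≤ (n:ℝ) * v := by
    rw [hv]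
    rw [mul_div_assoc', le_div_iff₀ hk0]
    nlinarith
  have hexp : (1 - v)^n ≤ Real.exp (-((n:ℝ) * v)) := by
    have h1 : 1 - v ≤ Real.exp (-v) := by
      have := Real.add_one_le_exp (-v)
      linarith
    calc (1 - v)^n ≤ (Real.exp (-v))^n := pow_le_pow_left₀ (by linarith) h1 n
      _ = Real.exp ((n:ℝ) * (-v)) := (Real.exp_nat_mul _ n).symm
      _ = Real.exp (-((n:ℝ) * v)) := by ring_nf
  have hkey : (k:ℝ) * n ≤ Real.exp ((n:ℝ) * v) := by
    have hne : (n:ℝ) = Real.exp (Real.log n) := (Real.exp_log hn0).symm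
    have h2 : (k:ℝ) * n ≤ (n:ℝ) * n := by nlinarith
    have h3 : (n:ℝ) * n = Real.exp (2 * Real.log n) := by
      rw [show (2:ℝ) * Real.log n = Real.log n + Real.log n by ring, Real.exp_add, ← hne]
    have h4 : Real.exp (2 * Real.log n) ≤ Real.exp ((n:ℝ) * v) :=
      Real.exp_le_exp.mpr (by linarith)
    linarith
  calc (k:ℝ) * (1 - v)^n ≤ (k:ℝ) * Real.exp (-((n:ℝ) * v)) := by
        apply mul_le_mul_of_nonneg_left hexp hk0.le
    _ ≤ 1/n := by
        rw [Real.exp_neg]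
        rw [mul_inv_le_iff₀ (Real.exp_pos _), one_div, inv_mul_eq_div, le_div_iff₀ hn0]
        linarith


lemma bad_event_prob (n : ℕ) (a b : Fin 2 → ℝ) :
    (Measure.pi fun _ : Fin n => unifSquare)
      (Set.univ.pi fun _ : Fin n => (box a b)ᶜ)
      = (1 - unifSquare (box a b)) ^ n := by
  rw [Measure.pi_pi]
  rw [prob_compl_eq_one_sub (measurableSet_box a b)]
  simp

lemma box_dist (c : EuclideanSpace ℝ (Fin 2)) (r : ℝ) (hr : 0 ≤ r)
    (p : EuclideanSpace ℝ (Fin 2))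
    (hp : p ∈ box (fun j => c j - r) (fun j => c j + r)) :
    dist p c ≤ Real.sqrt 2 * r := by
  have h0 := hp 0
  have h1 := hp 1
  simp only [Set.mem_Icc] at h0 h1
  rw [EuclideanSpace.dist_eq, Fin.sum_univ_two]
  have e : ∀ i : Fin 2, dist (p i) (c i)^2 = (p i - c i)^2 := fun i => by
    rw [Real.dist_eq, sq_abs]
  rw [e 0, e 1]
  have hb : (p 0 - c 0)^2 + (p 1 - c 1)^2 ≤ 2*r^2 := by
    nlinarith [h0.1, h0.2, h1.1, h1.2]
  calc Real.sqrt ((p 0 - c 0)^2 + (p 1 - c 1)^2) ≤ Real.sqrt (2*r^2) :=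
        Real.sqrt_le_sqrt hb
    _ = Real.sqrt 2 * r := by rw [Real.sqrt_mul (by norm_num), Real.sqrt_sq hr]

set_option maxHeartbeats 2000000 in
theorem random_points_contain_dispersed_subset :
    ∃ N₀ : ℕ, ∀ n : ℕ, N₀ ≤ n → ∀ k : ℕ, 3 * 10 ^ 5 ≤ k →
      (k : ℝ) ≤ (n : ℝ) / (10 ^ 5 * Real.log n) →
      1 - 1 / (n : ℝ≥0∞) ≤
        (Measure.pi fun _ : Fin n => unifSquare)
          {X : Fin n → EuclideanSpace ℝ (Fin 2) |
            ∃ s : Finset (Fin n), s.card = k ∧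
              ∀ i ∈ s, ∀ j ∈ s, i ≠ j → X i ≠ X j ∧
                (0.995 : ℝ) ^ ((3 : ℝ) / 2) * Real.sqrt 3 * ((4 : ℝ) / 27) ^ ((1 : ℝ) / 4) /
                    Real.sqrt k ≤ dist (X i) (X j)} := by
  classical
  refine ⟨3, fun n hn k hk hkn => ?_⟩
  have hn0 : 0 < n := by omega
  have hk0 : 0 < k := by omega
  have hq0 : (0:ℝ) < Real.sqrt k := Real.sqrt_pos.mpr (by exact_mod_cast hk0)
  obtain ⟨C, hCcard, hCIcc, hCdist⟩ := lattice_exists k hk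
  set ρ' : ℝ := 0.00225 / Real.sqrt k with hρ'def
  have hρ'0 : 0 < ρ' := by positivity
  set Q : EuclideanSpace ℝ (Fin 2) → Set (EuclideanSpace ℝ (Fin 2)) :=
    fun c => box (fun j => c j - ρ') (fun j => c j + ρ') with hQdef
  have hQsub : ∀ c ∈ C, Q c ⊆ unitSquare := by
    intro c hc p hp j
    have h1 := hCIcc c hc j
    have h2 := hp j
    simp only [Set.mem_Icc] at h1 h2
    exact ⟨by linarith [h2.1, h1.1], by linarith [h2.2, h1.2]⟩
  set v : ℝ := 0.00002025 / k with hvdef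
  have hv0 : (0:ℝ) ≤ v := by positivity
  have hv1 : v ≤ 1 := by
    rw [hvdef, div_le_one (by exact_mod_cast hk0)]
    have : (3*10^5:ℝ) ≤ k := by exact_mod_cast hk
    linarith
  have hQvol : ∀ c ∈ C, unifSquare (Q c) = ENNReal.ofReal v := by
    intro c hc
    rw [hQdef, unifSquare_box _ _ (hQsub c hc)]
    calc ∏ j : Fin 2, ENNReal.ofReal ((c j + ρ') - (c j - ρ'))
        = ∏ _j : Fin 2, ENNReal.ofReal (2*ρ') := by
          apply Finset.prod_congr rfl
          intro j _
          congr 1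
          ring
      _ = (ENNReal.ofReal (2*ρ'))^2 := by
          rw [Finset.prod_const]
          norm_num
      _ = ENNReal.ofReal ((2*ρ')^2) := (ENNReal.ofReal_pow (by positivity) 2).symm
      _ = ENNReal.ofReal v := by
          congr 1
          rw [hρ'def, hvdef]
          calc (2*(0.00225/Real.sqrt k))^2 = 0.00002025/(Real.sqrt k^2) := by ring
            _ = 0.00002025/(k:ℝ) := by rw [Real.sq_sqrt (Nat.cast_nonneg k)]
  set Bad : Set (Fin n → EuclideanSpace ℝ (Fin 2)) :=
    ⋃ c ∈ C, Set.univ.pi fun _ : Fin n => (Q c)ᶜ with hBadDef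
  have hBadmeas : MeasurableSet Bad := by
    apply MeasurableSet.biUnion C.countable_toSet
    intro c _
    exact MeasurableSet.univ_pi fun _ => (measurableSet_box _ _).compl
  have hμc : ∀ c ∈ C,
      (Measure.pi fun _ : Fin n => unifSquare)
        (Set.univ.pi fun _ : Fin n => (Q c)ᶜ) = ENNReal.ofReal ((1-v)^n) := by
    intro c hc
    rw [show (Set.univ.pi fun _ : Fin n => (Q c)ᶜ)
        = Set.univ.pi fun _ : Fin n => (box (fun j => c j - ρ') (fun j => c j + ρ'))ᶜ from rfl]
    rw [bad_event_prob n (fun j => c j - ρ') (fun j => c j + ρ')]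
    rw [show unifSquare (box (fun j => c j - ρ') (fun j => c j + ρ')) = ENNReal.ofReal v from
      hQvol c hc]
    rw [← ENNReal.ofReal_one, ← ENNReal.ofReal_sub _ hv0,
      ← ENNReal.ofReal_pow (by linarith)]
  have hBadle : (Measure.pi fun _ : Fin n => unifSquare) Bad
      ≤ ENNReal.ofReal ((k:ℝ) * (1-v)^n) := by
    calc (Measure.pi fun _ : Fin n => unifSquare) Bad
        ≤ ∑ c ∈ C, (Measure.pi fun _ : Fin n => unifSquare)
            (Set.univ.pi fun _ : Fin n => (Q c)ᶜ) := measure_biUnion_finset_le C _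
      _ = ∑ _c ∈ C, ENNReal.ofReal ((1-v)^n) := Finset.sum_congr rfl hμc
      _ = (k : ℝ≥0∞) * ENNReal.ofReal ((1-v)^n) := by
          rw [Finset.sum_const, hCcard, nsmul_eq_mul]
      _ = ENNReal.ofReal ((k:ℝ) * (1-v)^n) := by
          rw [ENNReal.ofReal_mul (Nat.cast_nonneg k), ENNReal.ofReal_natCast]
  have hBad : (Measure.pi fun _ : Fin n => unifSquare) Bad ≤ 1 / (n : ℝ≥0∞) := by
    refine le_trans hBadle ?_
    have hr := prob_num n k hn hk hkn v hvdef
    rw [one_div, ← ENNReal.ofReal_natCast n,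
      ← ENNReal.ofReal_inv_of_pos (by exact_mod_cast hn0)]
    apply ENNReal.ofReal_le_ofReal
    rw [← one_div]
    exact hr
  have hsub : Badᶜ ⊆ {X : Fin n → EuclideanSpace ℝ (Fin 2) |
      ∃ s : Finset (Fin n), s.card = k ∧
        ∀ i ∈ s, ∀ j ∈ s, i ≠ j → X i ≠ X j ∧
          (0.995 : ℝ) ^ ((3 : ℝ) / 2) * Real.sqrt 3 * ((4 : ℝ) / 27) ^ ((1 : ℝ) / 4) /
              Real.sqrt k ≤ dist (X i) (X j)} := by
    intro X hX
    have hfind : ∀ c ∈ C, ∃ i, X i ∈ Q c := by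
      intro c hc
      by_contra hcon
      push_neg at hcon
      apply hX
      rw [hBadDef]
      refine Set.mem_biUnion hc ?_
      intro i _
      exact hcon i
    set g : EuclideanSpace ℝ (Fin 2) → Fin n := fun c =>
      if h : ∃ i, X i ∈ Q c then h.choose else ⟨0, hn0⟩ with hgdef
    have hg : ∀ c ∈ C, X (g c) ∈ Q c := by
      intro c hc
      rw [hgdef]
      dsimp only
      rw [dif_pos (hfind c hc)]
      exact (hfind c hc).choose_spec
    have hdistXc : ∀ c ∈ C, dist (X (g c)) c ≤ Real.sqrt 2 * ρ' := fun c hc =>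
      box_dist c ρ' hρ'0.le _ (hg c hc)
    have hsq2 := sqrt2_le
    have hginj : Set.InjOn g C := by
      intro c hc c' hc' hgg
      by_contra hne
      have h1 := hdistXc c hc
      have h2 := hdistXc c' hc'
      have h3 := hCdist c hc c' hc' hne
      have hcm : dist c (X (g c)) = dist (X (g c)) c := dist_comm _ _
      have htri : dist c c' ≤ dist c (X (g c)) + dist (X (g c)) c' := dist_triangle _ _ _
      have heq : dist (X (g c)) c' = dist (X (g c')) c' := by rw [hgg]
      have hfin : 1.073/Real.sqrt k ≤ 2*(Real.sqrt 2 * (0.00225/Real.sqrt k)) := by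
        rw [← hρ'def]
        linarith
      have hexp : (1.073:ℝ) = (1.073/Real.sqrt k) * Real.sqrt k :=
        (div_mul_cancel₀ _ hq0.ne').symm
      have hexp2 : 2*(Real.sqrt 2 * (0.00225/Real.sqrt k)) * Real.sqrt k
          = 2*Real.sqrt 2*0.00225 := by
        field_simp
      have := mul_le_mul_of_nonneg_right hfin hq0.le
      rw [← hexp, hexp2] at this
      nlinarith [this, hsq2]
    set S : Finset (Fin n) := C.image g with hSdef
    have hScard : S.card = k := by
      rw [hSdef, Finset.card_image_of_injOn hginj, hCcard]
    refine ⟨S, hScard, ?_⟩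
    intro i hi j hj hij
    obtain ⟨c, hc, rfl⟩ := Finset.mem_image.mp hi
    obtain ⟨c', hc', rfl⟩ := Finset.mem_image.mp hj
    have hcc' : c ≠ c' := fun h => hij (by rw [h])
    have hd := hCdist c hc c' hc' hcc'
    have h1 := hdistXc c hc
    have h2 := hdistXc c' hc'
    have ht1 : dist c c' ≤ dist c (X (g c)) + dist (X (g c)) c' := dist_triangle _ _ _
    have ht2 : dist (X (g c)) c' ≤ dist (X (g c)) (X (g c')) + dist (X (g c')) c' :=
      dist_triangle _ _ _
    have hcm : dist c (X (g c)) = dist (X (g c)) c := dist_comm _ _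
    have hA0 : (0:ℝ) < (0.995 : ℝ) ^ ((3 : ℝ) / 2) * Real.sqrt 3 * ((4 : ℝ) / 27) ^ ((1 : ℝ) / 4) := by
      have q1 : (0:ℝ) < (0.995 : ℝ) ^ ((3 : ℝ) / 2) := Real.rpow_pos_of_pos (by norm_num) _
      have q2 : (0:ℝ) < ((4 : ℝ) / 27) ^ ((1 : ℝ) / 4) := Real.rpow_pos_of_pos (by norm_num) _
      have q3 : (0:ℝ) < Real.sqrt 3 := Real.sqrt_pos.mpr (by norm_num)
      positivity
    have hstep : (0.995 : ℝ) ^ ((3 : ℝ) / 2) * Real.sqrt 3 * ((4 : ℝ) / 27) ^ ((1 : ℝ) / 4) /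
        Real.sqrt k ≤ dist (X (g c)) (X (g c')) := by
      have hc1 : (0.995 : ℝ) ^ ((3 : ℝ) / 2) * Real.sqrt 3 * ((4 : ℝ) / 27) ^ ((1 : ℝ) / 4)
          ≤ 1.073 - 2*Real.sqrt 2*0.00225 := by
        have := const_bound
        linarith
      have hdiv : (0.995 : ℝ) ^ ((3 : ℝ) / 2) * Real.sqrt 3 * ((4 : ℝ) / 27) ^ ((1 : ℝ) / 4) /
          Real.sqrt k ≤ (1.073 - 2*Real.sqrt 2*0.00225) / Real.sqrt k := by
        gcongr
      have hrw : (1.073 - 2*Real.sqrt 2*0.00225) / Real.sqrt k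
          = 1.073/Real.sqrt k - 2*(Real.sqrt 2 * ρ') := by
        rw [hρ'def]
        ring
      rw [hrw] at hdiv
      linarith
    constructor
    · exact dist_pos.mp (lt_of_lt_of_le (by positivity) hstep)
    · exact hstep
  calc 1 - 1 / (n : ℝ≥0∞)
      ≤ 1 - (Measure.pi fun _ : Fin n => unifSquare) Bad := tsub_le_tsub_left hBad 1
    _ = (Measure.pi fun _ : Fin n => unifSquare) Badᶜ :=
        (prob_compl_eq_one_sub hBadmeas).symm
    _ ≤ _ := measure_mono hsub
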